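/- arXiv:1205.0797 — 2 statements merged into one kernel-verified Lean document; each statement's English description precedes it below -/
import Mathlib

section
/- If φ : u_n → u_n is a Lie algebra homomorphism, then φ(u_{n,i}) ⊆ u_{n,i} for all i = 1,...,n; i.e., φ preserves each term of the derived series. -/
open MvPolynomial

noncomputable section

/-- The polynomial algebra `Pₙ = K[x₀,…,x_{n-1}]`. -/
abbrev Pn (K : Type) [Field K] (n : ℕ) : Type := MvPolynomial (Fin n) K

/-- The Lie algebra of `K`-derivations of `Pₙ`. -/
abbrev DerPn (K : Type) [Field K] (n : ℕ) : Type :=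
  Derivation K (Pn K n) (Pn K n)

/-- The subalgebra `P_j = K[x₀,…,x_{j-1}]` of `Pₙ` (0-indexed: variables with index `< j`). -/
def Psub (K : Type) [Field K] (n j : ℕ) : Subalgebra K (Pn K n) :=
  MvPolynomial.supported K {k : Fin n | (k : ℕ) < j}

/-- The subspace `u_{n,i} = Σ_{j=i}^n P_{j-1}∂_j` (1-indexed `i`; `U K n 1 = u_n`).
A derivation `D` lies in it iff `D(x_j) ∈ P_{j-1}` for all `j` and `D(x_j) = 0` for `j < i`
(0-indexed: `D (X j) = 0` when `(j:ℕ)+1 < i`). -/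
def U (K : Type) [Field K] (n i : ℕ) : Submodule K (DerPn K n) where
  carrier := {D | ∀ j : Fin n, D (X j) ∈ Psub K n j ∧ ((j : ℕ) + 1 < i → D (X j) = 0)}
  add_mem' := by
    intro a b ha hb j
    refine ⟨?_, fun h => ?_⟩
    · simpa using Subalgebra.add_mem _ (ha j).1 (hb j).1
    · simp [(ha j).2 h, (hb j).2 h]
  zero_mem' := by
    intro j
    refine ⟨by simpa using (Psub K n j).zero_mem, fun _ => rfl⟩
  smul_mem' := by
    intro c a ha j
    refine ⟨?_, fun h => ?_⟩
    · simpa using Subalgebra.smul_mem _ (ha j).1 c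
    · simp [(ha j).2 h]

/-- The span of all brackets `⁅a,b⁆` with `a ∈ A`, `b ∈ B`. -/
def lieSpan (K : Type) [Field K] (n : ℕ) (A B : Submodule K (DerPn K n)) :
    Submodule K (DerPn K n) :=
  Submodule.span K {x | ∃ a ∈ A, ∃ b ∈ B, x = ⁅a, b⁆}

/-- The derived series of a subspace `G`: `G_{(0)} = G`, `G_{(i+1)} = [G_{(i)}, G_{(i)}]`. -/
def derivedSub (K : Type) [Field K] (n : ℕ) (G : Submodule K (DerPn K n)) : ℕ → Submodule K (DerPn K n)
  | 0 => G
  | i + 1 => lieSpan K n (derivedSub K n G i) (derivedSub K n G i)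

section Aux

variable {K : Type} [Field K] {n : ℕ}

/-- Commutativity of partial derivatives. -/
lemma pderiv_comm' (i j : Fin n) (p : Pn K n) :
    pderiv i (pderiv j p) = pderiv j (pderiv i p) := by
  induction p using MvPolynomial.induction_on with
  | C a => simp
  | add p q hp hq => simp [hp, hq]
  | mul_X p s ih =>
    have hzero : ∀ a b : Fin n, pderiv a (pderiv b (X s : Pn K n)) = 0 := by
      intro a b
      rcases eq_or_ne s b with rfl | h
      · simp [pderiv_X_self]
      · simp [pderiv_X_of_ne h]
    simp only [pderiv_mul, map_add, ih, hzero]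
    ring

/-- Sum of derivations applied pointwise. -/
lemma der_sum_apply {ι : Type*} (s : Finset ι) (f : ι → DerPn K n) (p : Pn K n) :
    (∑ k ∈ s, f k) p = ∑ k ∈ s, f k p := by
  induction s using Finset.cons_induction with
  | empty => simp
  | cons a s ha ih => simp [Finset.sum_cons, Derivation.add_apply, ih]

/-- Any derivation is the sum of its coordinates times partial derivatives. -/
lemma der_eq_sum (D : DerPn K n) :
    D = ∑ k : Fin n, D (X k) • (pderiv k : DerPn K n) := by
  apply MvPolynomial.derivation_ext
  intro j
  rw [der_sum_apply]
  rw [Finset.sum_eq_single j]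
  · simp [Derivation.smul_apply, pderiv_X_self]
  · intro k _ hk
    simp [Derivation.smul_apply, pderiv_X_of_ne (Ne.symm hk)]
  · simp

lemma Psub_mono {j j' : ℕ} (h : j ≤ j') : Psub K n j ≤ Psub K n j' :=
  MvPolynomial.supported_mono (fun k hk => lt_of_lt_of_le hk h)

/-- A derivation whose values on small variables lie in `Psub` maps `Psub` to itself. -/
lemma der_maps_Psub (D : DerPn K n) (j : ℕ)
    (hD : ∀ k : Fin n, D (X k) ∈ Psub K n k) {p : Pn K n} (hp : p ∈ Psub K n j) :
    D p ∈ Psub K n j := by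
  have : p ∈ Psub K n j ∧ D p ∈ Psub K n j := by
    refine Algebra.adjoin_induction ?_ ?_ ?_ ?_ hp
    · rintro x ⟨k, hk, rfl⟩
      exact ⟨Algebra.subset_adjoin ⟨k, hk, rfl⟩,
        Psub_mono (le_of_lt hk) (hD k)⟩
    · intro r
      refine ⟨Subalgebra.algebraMap_mem _ r, ?_⟩
      rw [Derivation.map_algebraMap]
      exact Subalgebra.zero_mem _
    · rintro x y _ _ ⟨hx1, hx2⟩ ⟨hy1, hy2⟩
      exact ⟨add_mem hx1 hy1, by rw [map_add]; exact add_mem hx2 hy2⟩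
    · rintro x y _ _ ⟨hx1, hx2⟩ ⟨hy1, hy2⟩
      refine ⟨mul_mem hx1 hy1, ?_⟩
      rw [Derivation.leibniz]
      rw [smul_eq_mul, smul_eq_mul]
      exact add_mem (mul_mem hx1 hy2) (mul_mem hy1 hx2)
  exact this.2

/-- A derivation vanishing on small variables vanishes on `Psub`. -/
lemma der_vanish_Psub (D : DerPn K n) (j : ℕ)
    (hD : ∀ k : Fin n, (k : ℕ) < j → D (X k) = 0) {p : Pn K n} (hp : p ∈ Psub K n j) :
    D p = 0 := by
  refine Algebra.adjoin_induction ?_ ?_ ?_ ?_ hp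
  · rintro x ⟨k, hk, rfl⟩
    exact hD k hk
  · intro r; exact Derivation.map_algebraMap D r
  · intro x y _ _ hx hy; rw [map_add, hx, hy, add_zero]
  · intro x y _ _ hx hy; rw [Derivation.leibniz, hx, hy, smul_zero, smul_zero, add_zero]

end Aux

section Anti

variable {K : Type} [Field K] {n : ℕ}

/-- Formal antiderivative in variable `k`. -/
def antider (k : Fin n) (f : Pn K n) : Pn K n :=
  ∑ m ∈ f.support, monomial (m + Finsupp.single k 1) (f.coeff m / ((m k : K) + 1))

lemma pderiv_antider [CharZero K] (k : Fin n) (f : Pn K n) :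
    pderiv k (antider k f) = f := by
  unfold antider
  rw [map_sum]
  have : ∀ m ∈ f.support,
      pderiv k (monomial (m + Finsupp.single k 1) (f.coeff m / ((m k : K) + 1)))
        = monomial m (f.coeff m) := by
    intro m _
    rw [pderiv_monomial]
    congr 1
    · simp
    · have h1 : ((m + Finsupp.single k 1 : Fin n →₀ ℕ)) k = m k + 1 := by
        simp [Finsupp.add_apply]
      rw [h1]
      push_cast
      exact div_mul_cancel₀ _ (Nat.cast_add_one_ne_zero (m k))
  rw [Finset.sum_congr rfl this]
  exact f.support_sum_monomial_coeff

lemma antider_mem (k : Fin n) (j : ℕ) (hk : (k : ℕ) < j) {f : Pn K n}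
    (hf : f ∈ Psub K n j) : antider k f ∈ Psub K n j := by
  apply Subalgebra.sum_mem
  intro m hm
  set c := f.coeff m / ((m k : K) + 1)
  rcases eq_or_ne c 0 with hc | hc
  · rw [hc, map_zero]; exact Subalgebra.zero_mem _
  · rw [Psub, MvPolynomial.mem_supported, MvPolynomial.vars_monomial hc]
    intro l hl
    rcases Finset.mem_union.mp (Finsupp.support_add hl) with h | h
    · have : l ∈ f.vars := (MvPolynomial.mem_vars l).mpr ⟨m, hm, h⟩
      exact MvPolynomial.mem_supported.mp hf this
    · have : l = k := Finset.mem_singleton.mp (Finsupp.support_single_subset h)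
      simpa [this] using hk

/-- The key bracket identity `⁅∂ₖ, F∂ⱼ⁆ = (∂ₖF)∂ⱼ`. -/
lemma bracket_pderiv_smul (k j : Fin n) (F : Pn K n) :
    ⁅(pderiv k : DerPn K n), F • (pderiv j : DerPn K n)⁆
      = (pderiv k F) • (pderiv j : DerPn K n) := by
  apply Derivation.ext
  intro p
  rw [Derivation.commutator_apply]
  simp only [Derivation.smul_apply, smul_eq_mul]
  rw [Derivation.leibniz, smul_eq_mul, smul_eq_mul, pderiv_comm' k j p]
  ring

end Anti

section USec

variable {K : Type} [Field K] {n : ℕ}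

lemma mem_U_iff {D : DerPn K n} {i : ℕ} :
    D ∈ U K n i ↔ ∀ j : Fin n, D (X j) ∈ Psub K n j ∧ ((j : ℕ) + 1 < i → D (X j) = 0) :=
  Iff.rfl

lemma U_mono {i i' : ℕ} (h : i ≤ i') : U K n i' ≤ U K n i := by
  intro D hD j
  exact ⟨(hD j).1, fun hj => (hD j).2 (lt_of_lt_of_le hj h)⟩

/-- A1: brackets of elements of `U i` land in `U (i+1)`. -/
lemma bracket_mem_U {i : ℕ} {D E : DerPn K n} (hD : D ∈ U K n i) (hE : E ∈ U K n i) :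
    ⁅D, E⁆ ∈ U K n (i + 1) := by
  intro j
  have hDX : ∀ k : Fin n, D (X k) ∈ Psub K n k := fun k => (hD k).1
  have hEX : ∀ k : Fin n, E (X k) ∈ Psub K n k := fun k => (hE k).1
  constructor
  · rw [Derivation.commutator_apply]
    exact sub_mem (der_maps_Psub D j hDX (hEX j)) (der_maps_Psub E j hEX (hDX j))
  · intro hj
    have hj' : (j : ℕ) < i := by omega
    rw [Derivation.commutator_apply]
    have hDz : ∀ k : Fin n, (k : ℕ) < (j : ℕ) → D (X k) = 0 := fun k hk =>
      (hD k).2 (by omega)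
    have hEz : ∀ k : Fin n, (k : ℕ) < (j : ℕ) → E (X k) = 0 := fun k hk =>
      (hE k).2 (by omega)
    rw [der_vanish_Psub D j hDz (hEX j), der_vanish_Psub E j hEz (hDX j), sub_zero]

lemma lieSpan_le_U {i : ℕ} : lieSpan K n (U K n i) (U K n i) ≤ U K n (i + 1) := by
  rw [lieSpan, Submodule.span_le]
  rintro x ⟨a, ha, b, hb, rfl⟩
  exact bracket_mem_U ha hb

/-- A2: `U (i+1)` is contained in the span of brackets of `U i`. -/
lemma U_le_lieSpan [CharZero K] {i : ℕ} (h1 : 1 ≤ i) (h2 : i < n) :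
    U K n (i + 1) ≤ lieSpan K n (U K n i) (U K n i) := by
  intro D hD
  rw [der_eq_sum D]
  apply Submodule.sum_mem
  intro j _
  by_cases hj : (j : ℕ) + 1 < i + 1
  · rw [(hD j).2 hj, zero_smul]
    exact Submodule.zero_mem _
  · -- j ≥ i
    have hij : i ≤ (j : ℕ) := by omega
    set k : Fin n := ⟨i - 1, by omega⟩ with hk
    have hkj : (k : ℕ) < (j : ℕ) := by simp [hk]; omega
    set f := D (X j) with hf
    have hfP : f ∈ Psub K n j := (hD j).1
    have ha : (pderiv k : DerPn K n) ∈ U K n i := by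
      intro m
      rcases eq_or_ne m k with hmk | hm
      · refine ⟨?_, fun hcon => ?_⟩
        · rw [hmk, pderiv_X_self]; exact Subalgebra.one_mem _
        · exfalso
          rw [hmk] at hcon
          have : (k : ℕ) = i - 1 := rfl
          omega
      · rw [pderiv_X_of_ne hm]
        exact ⟨Subalgebra.zero_mem _, fun _ => rfl⟩
    have hb : (antider k f) • (pderiv j : DerPn K n) ∈ U K n i := by
      intro m
      rcases eq_or_ne m j with hmj | hm
      · refine ⟨?_, fun hcon => by rw [hmj] at hcon; omega⟩
        rw [hmj, Derivation.smul_apply, pderiv_X_self, smul_eq_mul, mul_one]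
        exact antider_mem k j hkj hfP
      · rw [Derivation.smul_apply, pderiv_X_of_ne hm, smul_zero]
        exact ⟨Subalgebra.zero_mem _, fun _ => rfl⟩
    have hbr : f • (pderiv j : DerPn K n)
        = ⁅(pderiv k : DerPn K n), (antider k f) • (pderiv j : DerPn K n)⁆ := by
      rw [bracket_pderiv_smul, pderiv_antider]
    rw [hbr]
    exact Submodule.subset_span ⟨_, ha, _, hb, rfl⟩

end USec

section Main

variable {K : Type} [Field K] [CharZero K] {n : ℕ}

lemma derived_eq (k : ℕ) (hk : k + 1 ≤ n) :
    derivedSub K n (U K n 1) k = U K n (k + 1) := by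
  induction k with
  | zero => rfl
  | succ k ih =>
    have hk' : k + 1 ≤ n := by omega
    rw [derivedSub, ih hk']
    exact le_antisymm lieSpan_le_U (U_le_lieSpan (by omega) (by omega))

lemma hom_preserves (L : LieSubalgebra K (DerPn K n))
    (hL : L.toSubmodule = U K n 1) (φ : L →ₗ⁅K⁆ L) :
    ∀ k : ℕ, k + 1 ≤ n → ∀ d : DerPn K n, d ∈ derivedSub K n (U K n 1) k →
      ∃ hd : d ∈ L, ((φ ⟨d, hd⟩ : L) : DerPn K n) ∈ derivedSub K n (U K n 1) k := by
  intro k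
  induction k with
  | zero =>
    intro _ d hd
    have hdL : d ∈ L := by
      rw [← LieSubalgebra.mem_toSubmodule]
      show d ∈ L.toSubmodule
      rw [hL]; exact hd
    refine ⟨hdL, ?_⟩
    show ((φ ⟨d, hdL⟩ : L) : DerPn K n) ∈ U K n 1
    rw [← hL]
    exact (φ ⟨d, hdL⟩).2
  | succ k ih =>
    intro hk1 d hd
    have hk' : k + 1 ≤ n := by omega
    have hSL : derivedSub K n (U K n 1) k ≤ L.toSubmodule := by
      rw [derived_eq k hk', hL]
      exact U_mono (by omega)
    have hSL' : derivedSub K n (U K n 1) (k + 1) ≤ L.toSubmodule := by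
      rw [derived_eq (k+1) hk1, hL]
      exact U_mono (by omega)
    rw [derivedSub] at hd ⊢
    rw [lieSpan] at hd
    refine Submodule.span_induction ?_ ?_ ?_ ?_ hd
    · rintro x ⟨a, ha, b, hb, rfl⟩
      obtain ⟨haL, hφa⟩ := ih hk' a ha
      obtain ⟨hbL, hφb⟩ := ih hk' b hb
      have habL : ⁅a, b⁆ ∈ L := L.lie_mem haL hbL
      refine ⟨habL, ?_⟩
      have : (⟨⁅a, b⁆, habL⟩ : L) = ⁅(⟨a, haL⟩ : L), (⟨b, hbL⟩ : L)⁆ := rfl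
      rw [this, LieHom.map_lie]
      exact Submodule.subset_span ⟨_, hφa, _, hφb, rfl⟩
    · refine ⟨L.zero_mem, ?_⟩
      rw [show (⟨0, L.zero_mem⟩ : L) = 0 from rfl, map_zero]
      exact Submodule.zero_mem _
    · rintro x y hx hy ⟨hxL, hφx⟩ ⟨hyL, hφy⟩
      refine ⟨L.add_mem hxL hyL, ?_⟩
      have : (⟨x + y, L.add_mem hxL hyL⟩ : L) = ⟨x, hxL⟩ + ⟨y, hyL⟩ := rfl
      rw [this, map_add]
      exact Submodule.add_mem _ hφx hφy
    · rintro c x hx ⟨hxL, hφx⟩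
      refine ⟨L.smul_mem c hxL, ?_⟩
      have : (⟨c • x, L.smul_mem c hxL⟩ : L) = c • ⟨x, hxL⟩ := rfl
      rw [this, map_smul]
      exact Submodule.smul_mem _ c hφx

end Main

/-- every Lie algebra homomorphism `φ : u_n → u_n` preserves each term
`u_{n,i}` of the derived series. -/
theorem hom_preserves_U (K : Type) [Field K] [CharZero K] (n : ℕ) (hn : 2 ≤ n)
    (L : LieSubalgebra K (DerPn K n)) (hL : L.toSubmodule = U K n 1)
    (φ : L →ₗ⁅K⁆ L) (i : ℕ) (h1 : 1 ≤ i) (h2 : i ≤ n) :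
    ∀ x : L, (x : DerPn K n) ∈ U K n i → ((φ x : L) : DerPn K n) ∈ U K n i := by
  intro x hx
  have hi : i - 1 + 1 = i := Nat.sub_add_cancel h1
  have hA : derivedSub K n (U K n 1) (i - 1) = U K n i := by
    rw [derived_eq (i - 1) (by omega), hi]
  obtain ⟨hd, hres⟩ := hom_preserves L hL φ (i - 1) (by omega) x (by rw [hA]; exact hx)
  have hx' : (⟨(x : DerPn K n), hd⟩ : L) = x := Subtype.ext rfl
  rw [hx'] at hres
  rw [← hA]
  exact hres
end
end

section
/- For each i ≥ 0, the subspace Nᵢ = {u ∈ u_n | δⱼ^{i+1}(u) = 0 for j = 1,...,n−1}, where δⱼ = ad(∂ⱼ), is a finite-dimensional K-vector space; explicitly, Nᵢ = ⊕_{j=1}^{n} (Nᵢ ∩ P_{j-1}∂ⱼ), where Nᵢ ∩ P_{j-1}∂ⱼ has basis {x^α ∂ⱼ : α ∈ ℕ^{j-1}, α_k ≤ i for all k}. -/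
open MvPolynomial

noncomputable section

/-- `Nᵢ = {u ∈ u_n | ad(∂ⱼ)^{i+1}(u) = 0 for j = 1,…,n-1}` (0-indexed `j < n-1`). -/
def Nset (K : Type) [Field K] (n i : ℕ) : Set (DerPn K n) :=
  {u | u ∈ U K n 1 ∧ ∀ j : Fin n, (j : ℕ) < n - 1 →
    (fun v : DerPn K n => ⁅(pderiv j : DerPn K n), v⁆)^[i + 1] u = 0}


variable {K : Type} [Field K] {n : ℕ}


lemma coeff_pderiv' (j : Fin n) (p : MvPolynomial (Fin n) K) (m : Fin n →₀ ℕ) :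
    coeff m (pderiv j p) = ((m j + 1 : ℕ) : K) * coeff (m + Finsupp.single j 1) p := by
  induction p using MvPolynomial.induction_on' with
  | monomial s a =>
    simp only [pderiv_monomial, coeff_monomial]
    split_ifs with h1 h2 h2
    · subst h2
      simp [add_tsub_cancel_right] at h1 ⊢
      ring
    · by_cases hs : s j = 0
      · simp [hs]
      · exfalso; apply h2
        ext k
        rw [← h1]
        simp only [Finsupp.add_apply, Finsupp.tsub_apply, Finsupp.single_apply]
        rcases eq_or_ne j k with rfl | hk
        · simp; omega
        · simp [hk]
    · exfalso; apply h1; subst h2; exact add_tsub_cancel_right _ _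
    · simp
  | add p q hp hq => simp [hp, hq, mul_add]

lemma coeff_pderiv_iterate (j : Fin n) (p : MvPolynomial (Fin n) K) (s : ℕ)
    (m : Fin n →₀ ℕ) :
    coeff m ((fun q => pderiv j q)^[s] p)
      = ((∏ t ∈ Finset.range s, (m j + 1 + t) : ℕ) : K)
        * coeff (m + Finsupp.single j s) p := by
  induction s generalizing m with
  | zero => simp
  | succ s ih =>
    rw [Function.iterate_succ_apply', coeff_pderiv', ih]
    simp only [Finsupp.coe_add, Pi.add_apply, Finsupp.single_eq_same]
    rw [add_assoc m, ← Finsupp.single_add, Nat.add_comm 1 s, ← mul_assoc, ← Nat.cast_mul]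
    congr 2
    rw [Finset.prod_range_succ' (fun t => m j + 1 + t) s]
    simp only [add_zero]
    rw [mul_comm]
    congr 1
    exact Finset.prod_congr rfl fun t _ => by omega

lemma iterate_pderiv_eq_zero_iff [CharZero K] (j : Fin n) (p : MvPolynomial (Fin n) K) (i : ℕ) :
    (fun q => pderiv j q)^[i + 1] p = 0 ↔ ∀ m ∈ p.support, m j ≤ i := by
  constructor
  · intro h m hm
    by_contra hlt
    push_neg at hlt
    set m' := m - Finsupp.single j (i + 1) with hm'def
    have hm' : m' + Finsupp.single j (i + 1) = m := by
      ext k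
      simp only [hm'def, Finsupp.add_apply, Finsupp.tsub_apply, Finsupp.single_apply]
      rcases eq_or_ne j k with rfl | hk
      · simp; omega
      · simp [hk]
    have := congrArg (coeff m') h
    rw [coeff_pderiv_iterate, hm', coeff_zero] at this
    have hprod : ((∏ t ∈ Finset.range (i + 1), (m' j + 1 + t) : ℕ) : K) ≠ 0 :=
      Nat.cast_ne_zero.mpr (Finset.prod_pos fun t _ => by omega).ne'
    have hc : coeff m p = 0 := by
      rcases mul_eq_zero.mp this with h' | h'
      · exact absurd h' hprod
      · exact h'
    exact (MvPolynomial.mem_support_iff.mp hm) hc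
  · intro h
    apply MvPolynomial.ext
    intro m
    rw [coeff_pderiv_iterate, coeff_zero]
    have : coeff (m + Finsupp.single j (i + 1)) p = 0 := by
      by_contra hc
      have := h _ (MvPolynomial.mem_support_iff.mpr hc)
      simp only [Finsupp.coe_add, Pi.add_apply, Finsupp.single_eq_same] at this
      omega
    exact mul_eq_zero_of_right _ this

lemma iterate_bracket_apply (D : Derivation K (MvPolynomial (Fin n) K) (MvPolynomial (Fin n) K))
    (j l : Fin n) (s : ℕ) :
    ((fun v : Derivation K (MvPolynomial (Fin n) K) (MvPolynomial (Fin n) K) =>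
        ⁅(pderiv j : Derivation K (MvPolynomial (Fin n) K) (MvPolynomial (Fin n) K)), v⁆)^[s] D)
      (X l) = (fun q => pderiv j q)^[s] (D (X l)) := by
  induction s with
  | zero => rfl
  | succ s ih =>
    rw [Function.iterate_succ_apply', Function.iterate_succ_apply', Derivation.commutator_apply,
      ih]
    have : pderiv j (X l : MvPolynomial (Fin n) K) = C (if j = l then 1 else 0) := by
      rcases eq_or_ne j l with rfl | h
      · simp
      · simp [h]
    rw [this, derivation_C, sub_zero]


/-- Evaluation of a derivation at `X j`, as a linear map. -/
def evalX (K : Type) [Field K] (n : ℕ) (j : Fin n) : DerPn K n →ₗ[K] Pn K n where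
  toFun D := D (X j)
  map_add' _ _ := rfl
  map_smul' _ _ := rfl

/-- The explicit finite-dimensional submodule. -/
def NS (K : Type) [Field K] (n i : ℕ) : Submodule K (DerPn K n) :=
  ⨅ j : Fin n, Submodule.comap (evalX K n j)
    ((Psub K n j).toSubmodule ⊓ restrictDegree (Fin n) K i)

lemma mem_NS_iff (i : ℕ) (u : DerPn K n) :
    u ∈ NS K n i ↔ ∀ j : Fin n, u (X j) ∈ Psub K n j ∧
      ∀ m ∈ (u (X j)).support, ∀ k : Fin n, m k ≤ i := by
  rw [NS, Submodule.mem_iInf]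
  refine forall_congr' fun j => ?_
  rw [Submodule.mem_comap, Submodule.mem_inf, Subalgebra.mem_toSubmodule]
  exact and_congr Iff.rfl (mem_restrictDegree (σ := Fin n) (R := K) (u (X j)) i)

lemma NS_finiteDimensional (K : Type) [Field K] (n i : ℕ) :
    FiniteDimensional K (NS K n i) := by
  have hmem : ∀ u : NS K n i, ∀ j : Fin n,
      ((evalX K n j).comp (NS K n i).subtype) u ∈ restrictDegree (Fin n) K i := by
    intro u j
    have := (Submodule.mem_iInf _).mp u.2 j
    exact ((Submodule.mem_inf).mp ((Submodule.mem_comap).mp this)).2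
  let Φ : NS K n i →ₗ[K] (Fin n → restrictDegree (Fin n) K i) :=
    LinearMap.pi fun j => LinearMap.codRestrict (restrictDegree (Fin n) K i)
      ((evalX K n j).comp (NS K n i).subtype) (fun u => hmem u j)
  have hinj : Function.Injective Φ := by
    intro a b hab
    apply Subtype.ext
    apply derivation_ext
    intro j
    have := congrFun hab j
    exact Subtype.ext_iff.mp this
  exact FiniteDimensional.of_injective Φ hinj

/-- each `Nᵢ` is a finite-dimensional subspace of `u_n`; explicitly, it
consists of the derivations `u ∈ u_n` whose coefficient of `∂ⱼ` is a linear combination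
of monomials `x^α` with `α` supported on variables `< j` and all exponents `≤ i`. -/
theorem Nset_finiteDimensional (K : Type) [Field K] [CharZero K] (n : ℕ) (hn : 2 ≤ n)
    (i : ℕ) :
    ∃ S : Submodule K (DerPn K n), (S : Set (DerPn K n)) = Nset K n i ∧
      FiniteDimensional K S ∧
      ∀ u : DerPn K n, u ∈ S ↔ ∀ j : Fin n, u (X j) ∈ Psub K n j ∧
        ∀ m ∈ (u (X j)).support, ∀ k : Fin n, m k ≤ i := by
  refine ⟨NS K n i, ?_, NS_finiteDimensional K n i, fun u => mem_NS_iff i u⟩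
  ext u
  rw [SetLike.mem_coe, mem_NS_iff]
  constructor
  · intro h
    refine ⟨fun j => ⟨(h j).1, fun hc => absurd hc (by omega)⟩, fun j _ => ?_⟩
    apply derivation_ext
    intro l
    rw [iterate_bracket_apply]
    show _ = (0 : DerPn K n) (X l)
    rw [Derivation.zero_apply]
    exact (iterate_pderiv_eq_zero_iff j _ i).mpr fun m hm => (h l).2 m hm j
  · rintro ⟨hU, hit⟩ j
    refine ⟨(hU j).1, fun m hm k => ?_⟩
    by_cases hk : (k : ℕ) < n - 1
    · have h0 := congrArg (fun D : DerPn K n => D (X j)) (hit k hk)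
      simp only [Derivation.zero_apply] at h0
      rw [iterate_bracket_apply] at h0
      exact (iterate_pderiv_eq_zero_iff k (u (X j)) i).mp h0 m hm
    · have hvars : ↑(u (X j)).vars ⊆ {k' : Fin n | (k' : ℕ) < (j : ℕ)} :=
        mem_supported.mp (hU j).1
      by_contra hmk
      have hk' : k ∈ (u (X j)).vars :=
        (mem_vars k).mpr ⟨m, hm, Finsupp.mem_support_iff.mpr (by omega)⟩
      have hlt := hvars hk'
      simp only [Set.mem_setOf_eq] at hlt
      have := j.isLt
      omega
end
end
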